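/- Suppose (X_i, Y_i), i = 1,2,…, are i.i.d. samples drawn from a joint probability measure θ on ℝ² that is absolutely continuous with respect to two-dimensional Lebesgue measure. For each l, let θ̂_l = (1/l)·Σ_{i=1}^l δ_{(X_i,Y_i)} be the empirical joint measure, and let β̂_l denote the total variation distance between θ̂_l and the product of its two coordinate marginals. Then almost surely β̂_l = (l−1)/l for every l, and hence β̂_l → 1 as l → ∞, regardless of the true value of the beta-mixing coefficient of θ. -/

import Mathlib

open MeasureTheory Filter

/-- The total variation distance between a measure `θ` on `ℝ²` and the product of its two
coordinate marginals: `sup_E |θ(E) − (μ×ν)(E)|` over Borel sets `E ⊆ ℝ²`; this is the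
beta-mixing coefficient of `θ`. -/
noncomputable def betaTV (θ : Measure (ℝ × ℝ)) : ℝ :=
  sSup {x : ℝ | ∃ E : Set (ℝ × ℝ), MeasurableSet E ∧
    x = |(θ E).toReal - (((θ.map Prod.fst).prod (θ.map Prod.snd)) E).toReal|}

/-- The empirical measure `θ̂_l = (1/l)·Σ_{i<l} δ_{Z i ω}` of the first `l` samples. -/
noncomputable def empiricalMeasure (Z : ℕ → ℝ × ℝ) (l : ℕ) : Measure (ℝ × ℝ) :=
  (l : ENNReal)⁻¹ • ∑ i ∈ Finset.range l, Measure.dirac (Z i)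

open scoped Classical

instance emp_finite (z : ℕ → ℝ × ℝ) (l : ℕ) : IsFiniteMeasure (empiricalMeasure z l) := by
  constructor
  unfold empiricalMeasure
  simp only [Measure.smul_apply, Measure.coe_finset_sum, Finset.sum_apply, smul_eq_mul]
  simp only [Measure.dirac_apply, Set.indicator_univ, Pi.one_apply, Finset.sum_const,
    Finset.card_range, nsmul_eq_mul, mul_one]
  rcases Nat.eq_zero_or_pos l with h | h
  · simp [h]
  · exact ENNReal.mul_lt_top (ENNReal.inv_lt_top.2 (by exact_mod_cast h)) (by simp)

instance emp_fst_finite (z : ℕ → ℝ × ℝ) (l : ℕ) :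
    IsFiniteMeasure ((empiricalMeasure z l).map Prod.fst) :=
  Measure.isFiniteMeasure_map _ _

instance emp_snd_finite (z : ℕ → ℝ × ℝ) (l : ℕ) :
    IsFiniteMeasure ((empiricalMeasure z l).map Prod.snd) :=
  Measure.isFiniteMeasure_map _ _

lemma emp_apply (z : ℕ → ℝ × ℝ) (l : ℕ) (E : Set (ℝ × ℝ)) (hE : MeasurableSet E) :
    empiricalMeasure z l E =
      (l : ENNReal)⁻¹ * ((Finset.range l).filter (fun i => z i ∈ E)).card := by
  simp [empiricalMeasure, Measure.dirac_apply' _ hE, Set.indicator_apply,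
    Finset.sum_boole]

lemma emp_prod_apply (z : ℕ → ℝ × ℝ) (l : ℕ) (E : Set (ℝ × ℝ)) (hE : MeasurableSet E) :
    (((empiricalMeasure z l).map Prod.fst).prod ((empiricalMeasure z l).map Prod.snd)) E =
      (l : ENNReal)⁻¹ * (l : ENNReal)⁻¹ *
        ((Finset.range l ×ˢ Finset.range l).filter
          (fun p => ((z p.1).1, (z p.2).2) ∈ E)).card := by
  rw [Measure.prod_apply hE]
  rw [lintegral_map (measurable_measure_prodMk_left hE) measurable_fst]
  unfold empiricalMeasure
  rw [lintegral_smul_measure, lintegral_finset_sum_measure]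
  simp only [lintegral_dirac]
  have h1 : ∀ i : ℕ,
      (((l : ENNReal)⁻¹ • ∑ j ∈ Finset.range l, Measure.dirac (z j)).map Prod.snd)
        (Prod.mk ((z i).1) ⁻¹' E) =
      (l : ENNReal)⁻¹ * ((Finset.range l).filter (fun j => ((z i).1, (z j).2) ∈ E)).card := by
    intro i
    have hS : MeasurableSet (Prod.mk ((z i).1) ⁻¹' E) := measurable_prodMk_left hE
    rw [Measure.map_apply measurable_snd hS]
    have : MeasurableSet ((Prod.snd : ℝ × ℝ → ℝ) ⁻¹' (Prod.mk ((z i).1) ⁻¹' E)) :=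
      measurable_snd hS
    simp [Measure.smul_apply, Measure.dirac_apply' _ this, Set.indicator_apply,
      Finset.sum_boole]
  simp only [h1]
  have h2 : (((Finset.range l ×ˢ Finset.range l).filter
        (fun p => ((z p.1).1, (z p.2).2) ∈ E)).card : ENNReal) =
      ∑ i ∈ Finset.range l,
        (((Finset.range l).filter (fun j => ((z i).1, (z j).2) ∈ E)).card : ENNReal) := by
    have h2n : ((Finset.range l ×ˢ Finset.range l).filter
        (fun p => ((z p.1).1, (z p.2).2) ∈ E)).card =
        ∑ i ∈ Finset.range l,
          ((Finset.range l).filter (fun j => ((z i).1, (z j).2) ∈ E)).card := by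
      rw [Finset.card_filter, Finset.sum_product]
      exact Finset.sum_congr rfl fun i _ => (Finset.card_filter _ _).symm
    rw [h2n]
    push_cast
    ring
  rw [h2, smul_eq_mul, Finset.mul_sum, Finset.mul_sum]
  congr 1; ext i; ring

lemma abs_frac_bound (L n m : ℝ) (hL : 1 ≤ L) (h0 : 0 ≤ n) (hn : n ≤ L)
    (hnm : n ≤ m) (hm : m + L ≤ L^2 + n) : |n/L - m/L^2| ≤ (L-1)/L := by
  have hL0 : (0:ℝ) < L := lt_of_lt_of_le zero_lt_one hL
  have h1 : n/L - m/L^2 = (n*L - m)/L^2 := by field_simp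
  rw [h1, abs_div, abs_of_pos (by positivity : (0:ℝ) < L^2)]
  rw [div_le_div_iff₀ (by positivity) hL0]
  have habs : |n*L - m| ≤ (L-1)*L := by
    rw [abs_le]; constructor <;> nlinarith
  nlinarith [abs_nonneg (n*L - m)]

section Count
variable (z : ℕ → ℝ × ℝ) (l : ℕ) (E : Set (ℝ × ℝ))

noncomputable def Ncnt : ℕ := ((Finset.range l).filter (fun i => z i ∈ E)).card
noncomputable def Mcnt : ℕ := ((Finset.range l ×ˢ Finset.range l).filter
  (fun p => ((z p.1).1, (z p.2).2) ∈ E)).card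

lemma Ncnt_le : Ncnt z l E ≤ l := by
  simpa [Ncnt] using Finset.card_filter_le (Finset.range l) (fun i => z i ∈ E)

lemma Ncnt_le_Mcnt : Ncnt z l E ≤ Mcnt z l E := by
  apply Finset.card_le_card_of_injOn (fun i => (i, i))
  · intro i hi
    simp only [Finset.mem_filter, Finset.mem_range] at hi ⊢
    simp only [Finset.mem_coe, Finset.mem_filter, Finset.mem_product, Finset.mem_range] at hi ⊢
    exact ⟨⟨hi.1, hi.1⟩, by rw [Prod.mk.eta]; exact hi.2⟩
  · intro a _ b _ h
    simpa using congrArg Prod.fst h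

lemma Mcnt_bound : Mcnt z l E + l ≤ l * l + Ncnt z l E := by
  set A := (Finset.range l ×ˢ Finset.range l).filter
    (fun p => ((z p.1).1, (z p.2).2) ∈ E) with hA
  set B := ((Finset.range l).filter (fun i => z i ∉ E)).image (fun i => (i, i)) with hB
  have hBcard : B.card = l - Ncnt z l E := by
    have hinj : Function.Injective (fun i : ℕ => (i, i)) := fun a b h => by
      simpa using congrArg Prod.fst h
    rw [hB, Finset.card_image_of_injective _ hinj]
    have := Finset.card_filter_add_card_filter_not
      (s := Finset.range l) (p := fun i => z i ∈ E)
    simp only [Finset.card_range] at this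
    unfold Ncnt
    omega
  have hdisj : Disjoint A B := by
    rw [Finset.disjoint_left]
    intro p hpA hpB
    rw [hB, Finset.mem_image] at hpB
    obtain ⟨i, hi, rfl⟩ := hpB
    rw [Finset.mem_filter] at hi
    rw [hA, Finset.mem_filter] at hpA
    rw [Prod.mk.eta] at hpA
    exact hi.2 hpA.2
  have hsub : A ∪ B ⊆ Finset.range l ×ˢ Finset.range l := by
    apply Finset.union_subset
    · exact Finset.filter_subset _ _
    · intro p hp
      rw [hB, Finset.mem_image] at hp
      obtain ⟨i, hi, rfl⟩ := hp
      rw [Finset.mem_filter, Finset.mem_range] at hi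
      simp [Finset.mem_product, hi.1]
  have := Finset.card_le_card hsub
  rw [Finset.card_union_of_disjoint hdisj, hBcard, Finset.card_product, Finset.card_range] at this
  have hN := Ncnt_le z l E
  unfold Mcnt
  rw [← hA]
  omega

end Count

lemma emp_val (z : ℕ → ℝ × ℝ) (l : ℕ) (hl : 1 ≤ l) (E : Set (ℝ × ℝ)) (hE : MeasurableSet E) :
    |((empiricalMeasure z l) E).toReal -
      ((((empiricalMeasure z l).map Prod.fst).prod ((empiricalMeasure z l).map Prod.snd)) E).toReal|
    = |(Ncnt z l E : ℝ)/l - (Mcnt z l E : ℝ)/(l:ℝ)^2| := by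
  have hl0 : (l : ENNReal) ≠ 0 := by exact_mod_cast Nat.one_le_iff_ne_zero.1 hl
  rw [emp_apply z l E hE, emp_prod_apply z l E hE]
  rw [ENNReal.toReal_mul, ENNReal.toReal_mul, ENNReal.toReal_mul, ENNReal.toReal_inv]
  simp only [ENNReal.toReal_natCast]
  congr 1
  unfold Ncnt Mcnt
  field_simp

lemma betaTV_emp (z : ℕ → ℝ × ℝ) (hx : ∀ i j, i ≠ j → (z i).1 ≠ (z j).1)
    (hy : ∀ i j, i ≠ j → (z i).2 ≠ (z j).2) (l : ℕ) (hl : 1 ≤ l) :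
    betaTV (empiricalMeasure z l) = ((l : ℝ) - 1) / l := by
  have hlR : (1:ℝ) ≤ l := by exact_mod_cast hl
  have hl0 : (0:ℝ) < l := lt_of_lt_of_le zero_lt_one hlR
  set S := {x : ℝ | ∃ E : Set (ℝ × ℝ), MeasurableSet E ∧
    x = |((empiricalMeasure z l) E).toReal -
      ((((empiricalMeasure z l).map Prod.fst).prod
        ((empiricalMeasure z l).map Prod.snd)) E).toReal|} with hS
  -- every element of S is ≤ (l-1)/l
  have hub : ∀ x ∈ S, x ≤ ((l:ℝ) - 1)/l := by
    rintro x ⟨E, hE, rfl⟩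
    rw [emp_val z l hl E hE]
    apply abs_frac_bound _ _ _ hlR
    · positivity
    · exact_mod_cast Ncnt_le z l E
    · exact_mod_cast Ncnt_le_Mcnt z l E
    · have := Mcnt_bound z l E
      have : ((Mcnt z l E : ℝ) + l ≤ (l:ℝ)*l + Ncnt z l E) := by exact_mod_cast this
      nlinarith
  -- the value (l-1)/l is attained at E0
  have key : ∀ E : Set (ℝ × ℝ), E = (((Finset.range l).image z : Finset (ℝ × ℝ)) : Set (ℝ × ℝ)) →
      Ncnt z l E = l ∧ Mcnt z l E = l := by
    intro E hE0
    constructor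
    · unfold Ncnt
      refine le_antisymm (le_trans (Finset.card_filter_le _ _) (le_of_eq (Finset.card_range l))) ?_
      refine le_trans (le_of_eq (Finset.card_range l).symm) (Finset.card_le_card ?_)
      intro i hi
      refine Finset.mem_filter.mpr ⟨hi, ?_⟩
      rw [hE0]
      simp only [Finset.coe_image]
      exact Set.mem_image_of_mem z (Finset.mem_coe.mpr hi)
    · unfold Mcnt
      refine Eq.trans ?_ (Finset.card_range l)
      refine (Finset.card_nbij (fun i => (i, i)) ?_ ?_ ?_).symm
      · intro i hi
        refine Finset.mem_filter.mpr ⟨Finset.mem_product.mpr ⟨hi, hi⟩, ?_⟩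
        rw [Prod.mk.eta, hE0]
        simp only [Finset.coe_image]
        exact Set.mem_image_of_mem z (Finset.mem_coe.mpr hi)
      · intro a _ b _ h
        simpa using congrArg Prod.fst h
      · intro p hp
        obtain ⟨hps, hpE⟩ := Finset.mem_filter.mp (Finset.mem_coe.mp hp)
        obtain ⟨hp1, hp2⟩ := Finset.mem_product.mp hps
        rw [hE0] at hpE
        simp only [Finset.coe_image, Set.mem_image, Finset.mem_coe] at hpE
        obtain ⟨w, hw, hzw⟩ := hpE
        have hw1 : (z w).1 = (z p.1).1 := by rw [hzw]
        have hw2 : (z w).2 = (z p.2).2 := by rw [hzw]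
        have e1 : w = p.1 := by_contra fun h => hx w p.1 h hw1
        have e2 : w = p.2 := by_contra fun h => hy w p.2 h hw2
        refine ⟨w, Finset.mem_coe.mpr (e1 ▸ hp1), ?_⟩
        rw [Prod.ext_iff]
        exact ⟨e1, e2⟩
  have hmem : ((l:ℝ) - 1)/l ∈ S := by
    refine ⟨((Finset.range l).image z : Finset (ℝ × ℝ)), (Finset.image _ _).measurableSet, ?_⟩
    obtain ⟨hN, hM⟩ := key _ rfl
    rw [emp_val z l hl _ (Finset.image _ _).measurableSet, hN, hM]
    rw [abs_of_nonneg]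
    · field_simp
    · have h2 : (l:ℝ)/(l:ℝ)^2 ≤ (l:ℝ)/l := by
        apply div_le_div_of_nonneg_left hl0.le hl0
        nlinarith
      linarith [h2]
  -- conclude
  have : betaTV (empiricalMeasure z l) = sSup S := rfl
  rw [this]
  exact le_antisymm (csSup_le ⟨_, hmem⟩ hub) (le_csSup ⟨_, hub⟩ hmem)

lemma marg_null_fst (θ : Measure (ℝ × ℝ)) (hac : θ ≪ volume) (x : ℝ) :
    θ (Prod.fst ⁻¹' {x}) = 0 := by
  apply hac
  have h : (Prod.fst ⁻¹' {x} : Set (ℝ × ℝ)) = {x} ×ˢ Set.univ := by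
    ext ⟨a, b⟩; simp [eq_comm]
  rw [h, Measure.volume_eq_prod, Measure.prod_prod]
  simp

lemma marg_null_snd (θ : Measure (ℝ × ℝ)) (hac : θ ≪ volume) (y : ℝ) :
    θ (Prod.snd ⁻¹' {y}) = 0 := by
  apply hac
  have h : (Prod.snd ⁻¹' {y} : Set (ℝ × ℝ)) = Set.univ ×ˢ {y} := by
    ext ⟨a, b⟩; simp [eq_comm]
  rw [h, Measure.volume_eq_prod, Measure.prod_prod]
  simp

lemma prod_diag_null_fst (θ : Measure (ℝ × ℝ)) [IsProbabilityMeasure θ] (hac : θ ≪ volume) :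
    (θ.prod θ) {p : (ℝ × ℝ) × (ℝ × ℝ) | p.1.1 = p.2.1} = 0 := by
  have hA : MeasurableSet {p : (ℝ × ℝ) × (ℝ × ℝ) | p.1.1 = p.2.1} :=
    measurableSet_eq_fun (measurable_fst.comp measurable_fst) (measurable_fst.comp measurable_snd)
  rw [Measure.prod_apply hA]
  have h0 : ∀ a : ℝ × ℝ, θ {b : ℝ × ℝ | a.1 = b.1} = 0 := by
    intro a
    have h : {b : ℝ × ℝ | a.1 = b.1} = Prod.fst ⁻¹' {a.1} := by
      ext b; simp [eq_comm]
    rw [h]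
    exact marg_null_fst θ hac a.1
  simp only [Set.preimage_setOf_eq]
  simp [h0]

lemma prod_diag_null_snd (θ : Measure (ℝ × ℝ)) [IsProbabilityMeasure θ] (hac : θ ≪ volume) :
    (θ.prod θ) {p : (ℝ × ℝ) × (ℝ × ℝ) | p.1.2 = p.2.2} = 0 := by
  have hA : MeasurableSet {p : (ℝ × ℝ) × (ℝ × ℝ) | p.1.2 = p.2.2} :=
    measurableSet_eq_fun (measurable_snd.comp measurable_fst) (measurable_snd.comp measurable_snd)
  rw [Measure.prod_apply hA]
  have h0 : ∀ a : ℝ × ℝ, θ {b : ℝ × ℝ | a.2 = b.2} = 0 := by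
    intro a
    have h : {b : ℝ × ℝ | a.2 = b.2} = Prod.snd ⁻¹' {a.2} := by
      ext b; simp [eq_comm]
    rw [h]
    exact marg_null_snd θ hac a.2
  simp only [Set.preimage_setOf_eq]
  simp [h0]

lemma distinct_ae
    {Ω : Type*} [MeasurableSpace Ω] (P : Measure Ω) [IsProbabilityMeasure P]
    (θ : Measure (ℝ × ℝ)) [IsProbabilityMeasure θ] (hac : θ ≪ volume)
    (Z : ℕ → Ω → ℝ × ℝ) (hmeas : ∀ i, Measurable (Z i))
    (hindep : ProbabilityTheory.iIndepFun Z P)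
    (hdist : ∀ i, P.map (Z i) = θ) :
    ∀ᵐ ω ∂P, ∀ i j, i ≠ j → (Z i ω).1 ≠ (Z j ω).1 ∧ (Z i ω).2 ≠ (Z j ω).2 := by
  rw [ae_all_iff]
  intro i
  rw [ae_all_iff]
  intro j
  by_cases hij : i = j
  · filter_upwards with ω h; exact absurd hij h
  · have hIF : ProbabilityTheory.IndepFun (Z i) (Z j) P := hindep.indepFun hij
    have hmap : P.map (fun ω => (Z i ω, Z j ω)) = θ.prod θ := by
      rw [(ProbabilityTheory.indepFun_iff_map_prod_eq_prod_map_map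
        (hmeas i).aemeasurable (hmeas j).aemeasurable).mp hIF, hdist, hdist]
    have hW : Measurable (fun ω => (Z i ω, Z j ω)) := (hmeas i).prodMk (hmeas j)
    have hA1 : MeasurableSet {p : (ℝ × ℝ) × (ℝ × ℝ) | p.1.1 = p.2.1} :=
      measurableSet_eq_fun (measurable_fst.comp measurable_fst)
        (measurable_fst.comp measurable_snd)
    have hA2 : MeasurableSet {p : (ℝ × ℝ) × (ℝ × ℝ) | p.1.2 = p.2.2} :=
      measurableSet_eq_fun (measurable_snd.comp measurable_fst)
        (measurable_snd.comp measurable_snd)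
    have h1 : P {ω | (Z i ω).1 = (Z j ω).1} = 0 := by
      have : {ω | (Z i ω).1 = (Z j ω).1} =
          (fun ω => (Z i ω, Z j ω)) ⁻¹' {p : (ℝ × ℝ) × (ℝ × ℝ) | p.1.1 = p.2.1} := rfl
      rw [this, ← Measure.map_apply hW hA1, hmap]
      exact prod_diag_null_fst θ hac
    have h2 : P {ω | (Z i ω).2 = (Z j ω).2} = 0 := by
      have : {ω | (Z i ω).2 = (Z j ω).2} =
          (fun ω => (Z i ω, Z j ω)) ⁻¹' {p : (ℝ × ℝ) × (ℝ × ℝ) | p.1.2 = p.2.2} := rfl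
      rw [this, ← Measure.map_apply hW hA2, hmap]
      exact prod_diag_null_snd θ hac
    have e1 : ∀ᵐ ω ∂P, (Z i ω).1 ≠ (Z j ω).1 := by
      rw [ae_iff]; simp only [not_not]; exact h1
    have e2 : ∀ᵐ ω ∂P, (Z i ω).2 ≠ (Z j ω).2 := by
      rw [ae_iff]; simp only [not_not]; exact h2
    filter_upwards [e1, e2] with ω hω1 hω2 _
    exact ⟨hω1, hω2⟩

/-- If `(X_i, Y_i)` are i.i.d. samples from a joint measure `θ` on `ℝ²` that is absolutely
continuous w.r.t. two-dimensional Lebesgue measure, then almost surely the beta-mixing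
coefficient `β̂_l` of the empirical joint measure equals `(l−1)/l` for every `l ≥ 1`, and
hence `β̂_l → 1`, regardless of the true beta-mixing coefficient of `θ`. -/
theorem empirical_beta_is_inconsistent
    {Ω : Type*} [MeasurableSpace Ω] (P : Measure Ω) [IsProbabilityMeasure P]
    (θ : Measure (ℝ × ℝ)) [IsProbabilityMeasure θ] (hac : θ ≪ volume)
    (Z : ℕ → Ω → ℝ × ℝ) (hmeas : ∀ i, Measurable (Z i))
    (hindep : ProbabilityTheory.iIndepFun Z P)
    (hdist : ∀ i, P.map (Z i) = θ) :
    ∀ᵐ ω ∂P,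
      (∀ l : ℕ, 1 ≤ l →
        betaTV (empiricalMeasure (fun i => Z i ω) l) = ((l : ℝ) - 1) / l) ∧
      Tendsto (fun l : ℕ => betaTV (empiricalMeasure (fun i => Z i ω) l))
        atTop (nhds 1) := by
  filter_upwards [distinct_ae P θ hac Z hmeas hindep hdist] with ω hω
  have hbeta : ∀ l : ℕ, 1 ≤ l →
      betaTV (empiricalMeasure (fun i => Z i ω) l) = ((l : ℝ) - 1) / l :=
    fun l hl => betaTV_emp (fun i => Z i ω)
      (fun i j h => (hω i j h).1) (fun i j h => (hω i j h).2) l hl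
  refine ⟨hbeta, ?_⟩
  have h1 : Tendsto (fun l : ℕ => 1 - 1/(l:ℝ)) atTop (nhds 1) := by
    simpa using (tendsto_const_nhds (x := (1:ℝ))).sub tendsto_one_div_atTop_nhds_zero_nat
  refine h1.congr' ?_
  filter_upwards [eventually_ge_atTop 1] with l hl
  rw [hbeta l hl]
  have hl0 : (0:ℝ) < l := by exact_mod_cast hl
  field_simp
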